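/- (Existence of a high-gain element for greedy selection.) Let f be a real-valued submodular function on finite subsets of a type α, i.e., for all finite X ⊆ Y and any x, f(Y ∪ {x}) − f(Y) ≤ f(X ∪ {x}) − f(X). Then for any finite set E and any nonempty finite set S, there exists x ∈ S such that f(E ∪ {x}) − f(E) ≥ (f(E ∪ S) − f(E)) / |S|. -/

import Mathlib

/-- **Existence of a high-gain element for greedy selection.** If `f` on finite subsets
of `α` is submodular, then for any finite `E` and nonempty finite `S` there is `x ∈ S`
with `f (E ∪ {x}) − f E ≥ (f (E ∪ S) − f E) / |S|`. -/
theorem exists_high_gain_element {α : Type*} [DecidableEq α] (f : Finset α → ℝ)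
    (hsub : ∀ X Y : Finset α, X ⊆ Y → ∀ x : α,
      f (insert x Y) - f Y ≤ f (insert x X) - f X)
    (E S : Finset α) (hS : S.Nonempty) :
    ∃ x ∈ S, (f (E ∪ S) - f E) / (S.card : ℝ) ≤ f (insert x E) - f E := by
  have key : ∀ T : Finset α, f (E ∪ T) - f E ≤ ∑ x ∈ T, (f (insert x E) - f E) := by
    intro T
    induction T using Finset.induction_on with
    | empty => simp
    | insert a T ha ih =>
      rw [Finset.sum_insert ha, Finset.union_insert]
      have h1 := hsub E (E ∪ T) Finset.subset_union_left a
      linarith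
  have hcard : (0 : ℝ) < S.card := by
    exact_mod_cast Finset.card_pos.mpr hS
  by_contra h
  push_neg at h
  have hsum : ∑ x ∈ S, (f (insert x E) - f E) < ∑ x ∈ S, (f (E ∪ S) - f E) / (S.card : ℝ) :=
    Finset.sum_lt_sum_of_nonempty hS (fun x hx => h x hx)
  rw [Finset.sum_const, nsmul_eq_mul, mul_div_cancel₀ _ (ne_of_gt hcard)] at hsum
  have := key S
  linarith
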